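/- Given an input distribution P(x,y) and a Bell-local detection-efficiency model reproducing correlations P(a,b|x,y) (conditioned on both detectors clicking), the correlated-settings model defined by P_CS(a,b,x,y,λ) = P(x,y)·P_DE(a,b,λ | x,y, D_A, D_B) is a well-defined probability distribution that reproduces both the input distribution P(x,y) and the correlations P(a,b|x,y), and is Bell-local. -/

import Mathlib

open Finset Real

noncomputable section

variable {A B X Y L : Type*} [Fintype A] [Fintype B] [Fintype X] [Fintype Y] [Fintype L]

/-- marginal P(x,y,λ) of a joint distribution P(a,b,x,y,λ) -/
def mXYL (P : A → B → X → Y → L → ℝ) (x : X) (y : Y) (l : L) : ℝ :=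
  ∑ a, ∑ b, P a b x y l

/-- marginal P(x,y) -/
def mXY (P : A → B → X → Y → L → ℝ) (x : X) (y : Y) : ℝ := ∑ l, mXYL P x y l

/-- marginal P(λ) -/
def mL (P : A → B → X → Y → L → ℝ) (l : L) : ℝ := ∑ x, ∑ y, mXYL P x y l

/-- marginal P(x,λ) -/
def mXL (P : A → B → X → Y → L → ℝ) (x : X) (l : L) : ℝ := ∑ y, mXYL P x y l

/-- marginal P(y,λ) -/
def mYL (P : A → B → X → Y → L → ℝ) (y : Y) (l : L) : ℝ := ∑ x, mXYL P x y l

/-- marginal P(a,b,x,y) -/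
def mABXY (P : A → B → X → Y → L → ℝ) (a : A) (b : B) (x : X) (y : Y) : ℝ :=
  ∑ l, P a b x y l

/-- marginal P(a,x,λ) -/
def mAXL (P : A → B → X → Y → L → ℝ) (a : A) (x : X) (l : L) : ℝ :=
  ∑ b, ∑ y, P a b x y l

/-- marginal P(b,y,λ) -/
def mBYL (P : A → B → X → Y → L → ℝ) (b : B) (y : Y) (l : L) : ℝ :=
  ∑ a, ∑ x, P a b x y l

/-- conditional P(a|x,λ) -/
def cA (P : A → B → X → Y → L → ℝ) (a : A) (x : X) (l : L) : ℝ :=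
  mAXL P a x l / mXL P x l

/-- conditional P(b|y,λ) -/
def cB (P : A → B → X → Y → L → ℝ) (b : B) (y : Y) (l : L) : ℝ :=
  mBYL P b y l / mYL P y l

/-- Bell locality: P(a,b|x,y,λ) = P(a|x,λ)·P(b|y,λ) whenever P(x,y,λ) > 0 -/
def BellLocal (P : A → B → X → Y → L → ℝ) : Prop :=
  ∀ a b x y l, 0 < mXYL P x y l →
    P a b x y l / mXYL P x y l = cA P a x l * cB P b y l

/-- the joint is a probability distribution -/
def IsDist (P : A → B → X → Y → L → ℝ) : Prop :=
  (∀ a b x y l, 0 ≤ P a b x y l) ∧ ∑ a, ∑ b, ∑ x, ∑ y, ∑ l, P a b x y l = 1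

/-- Shannon entropy (in bits) of a finitely supported distribution -/
def ent {I : Type*} [Fintype I] (q : I → ℝ) : ℝ := -∑ i, q i * Real.logb 2 (q i)

/-- mutual information I(x,y : λ) of a correlated-settings model -/
def miInputsLambda (P : A → B → X → Y → L → ℝ) : ℝ :=
  ent (fun xy : X × Y => mXY P xy.1 xy.2) + ent (mL P)
    - ent (fun q : (X × Y) × L => mXYL P q.1.1 q.1.2 q.2)

end

/-- given an input distribution `Pin(x,y)` and a Bell-local
detection-efficiency model (hidden variable λ with distribution `Plam`
independent of the inputs, conditional distributions
`K(a,b,D_A,D_B|x,y,λ) = KA(a,D_A|x,λ)·KB(b,D_B|y,λ)`) which reproduces the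
correlations `Pc(a,b|x,y) = P_DE(a,b|x,y,D_A=1,D_B=1)`, the correlated-settings
model `P_CS(a,b,x,y,λ) = Pin(x,y)·P_DE(a,b,λ|x,y,D_A=1,D_B=1)` is a well-defined
probability distribution that reproduces both `Pin` and `Pc`, and is
Bell-local. -/
theorem stmt8 {A B X Y L : Type*} [Fintype A] [Fintype B] [Fintype X] [Fintype Y] [Fintype L]
    (Pin : X → Y → ℝ) (Plam : L → ℝ)
    (K : A → B → Bool → Bool → X → Y → L → ℝ)
    (KA : A → Bool → X → L → ℝ) (KB : B → Bool → Y → L → ℝ)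
    (Pc : A → B → X → Y → ℝ)
    (hPin : (∀ x y, 0 ≤ Pin x y) ∧ ∑ x, ∑ y, Pin x y = 1)
    (hPlam : (∀ l, 0 ≤ Plam l) ∧ ∑ l, Plam l = 1)
    (hKA : ∀ x l, (∀ a dA, 0 ≤ KA a dA x l) ∧ ∑ a, ∑ dA, KA a dA x l = 1)
    (hKB : ∀ y l, (∀ b dB, 0 ≤ KB b dB y l) ∧ ∑ b, ∑ dB, KB b dB y l = 1)
    -- Bell locality of the detection-efficiency model
    (hK : ∀ a b dA dB x y l, K a b dA dB x y l = KA a dA x l * KB b dB y l)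
    -- both detectors click with positive probability
    (hD : ∀ x y, 0 < ∑ l, Plam l * ∑ a, ∑ b, K a b true true x y l)
    -- the detection-efficiency model reproduces Pc, conditioned on both clicks
    (hrep : ∀ a b x y, Pc a b x y =
      (∑ l, Plam l * K a b true true x y l)
        / (∑ l, Plam l * ∑ a', ∑ b', K a' b' true true x y l)) :
    -- the derived correlated-settings model
    (let P : A → B → X → Y → L → ℝ := fun a b x y l =>
        Pin x y * (Plam l * K a b true true x y l
          / (∑ l', Plam l' * ∑ a', ∑ b', K a' b' true true x y l'))
     IsDist P ∧
     (∀ x y, mXY P x y = Pin x y) ∧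
     (∀ a b x y, 0 < Pin x y → mABXY P a b x y / Pin x y = Pc a b x y) ∧
     BellLocal P) := by
  intro P
  obtain ⟨hPin0, hPin1⟩ := hPin
  obtain ⟨hPlam0, hPlam1⟩ := hPlam
  set SA : X → L → ℝ := fun x l => ∑ a, KA a true x l with hSAdef
  set SB : Y → L → ℝ := fun y l => ∑ b, KB b true y l with hSBdef
  set N : X → Y → ℝ := fun x y => ∑ l, Plam l * ∑ a, ∑ b, K a b true true x y l with hNdef
  have hNpos : ∀ x y, 0 < N x y := hD
  have hNne : ∀ x y, N x y ≠ 0 := fun x y => (hNpos x y).ne'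
  have hSA0 : ∀ x l, 0 ≤ SA x l := fun x l => Finset.sum_nonneg fun a _ => (hKA x l).1 a true
  have hSB0 : ∀ y l, 0 ≤ SB y l := fun y l => Finset.sum_nonneg fun b _ => (hKB y l).1 b true
  have foldA : ∀ x l, (∑ a, KA a true x l) = SA x l := fun _ _ => rfl
  have foldB : ∀ y l, (∑ b, KB b true y l) = SB y l := fun _ _ => rfl
  have hS' : ∀ x y l, (∑ a, ∑ b, KA a true x l * KB b true y l) = SA x l * SB y l := by
    intro x y l
    simp only [← Finset.mul_sum, foldB]
    rw [← Finset.sum_mul, foldA]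
  have hS : ∀ x y l, (∑ a, ∑ b, K a b true true x y l) = SA x l * SB y l := by
    intro x y l
    simp only [hK]
    exact hS' x y l
  have hP : ∀ a b x y l,
      P a b x y l = Pin x y * (Plam l * (KA a true x l * KB b true y l) / N x y) := by
    intro a b x y l
    simp only [P, hK, hNdef]
  have hP0 : ∀ a b x y l, 0 ≤ P a b x y l := by
    intro a b x y l
    rw [hP]
    exact mul_nonneg (hPin0 x y) (div_nonneg (mul_nonneg (hPlam0 l)
      (mul_nonneg ((hKA x l).1 a true) ((hKB y l).1 b true))) (hNpos x y).le)
  have hmXYL : ∀ x y l, mXYL P x y l = Pin x y * (Plam l * (SA x l * SB y l) / N x y) := by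
    intro x y l
    simp only [mXYL, hP]
    rw [show (∑ a, ∑ b, Pin x y * (Plam l * (KA a true x l * KB b true y l) / N x y))
        = Pin x y * Plam l / N x y * ∑ a, ∑ b, KA a true x l * KB b true y l from by
      rw [Finset.mul_sum]
      refine Finset.sum_congr rfl fun a _ => ?_
      rw [Finset.mul_sum]
      refine Finset.sum_congr rfl fun b' _ => ?_
      field_simp]
    rw [hS' x y l]
    ring
  have hmXY : ∀ x y, mXY P x y = Pin x y := by
    intro x y
    simp only [mXY, hmXYL, ← Finset.mul_sum]
    rw [← Finset.sum_div, show (∑ l, Plam l * (SA x l * SB y l)) = N x y from by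
      simp only [hNdef, hS], div_self (hNne x y), mul_one]
  have hmABXY : ∀ a b x y, mABXY P a b x y = Pin x y * Pc a b x y := by
    intro a b x y
    simp only [mABXY, P, ← Finset.mul_sum, ← Finset.sum_div, hrep]
  have hPc1 : ∀ x y, ∑ a, ∑ b, Pc a b x y = 1 := by
    intro x y
    simp only [hrep, ← Finset.sum_div]
    rw [div_eq_one_iff_eq (hNne x y)]
    calc ∑ a, ∑ b, ∑ l, Plam l * K a b true true x y l
        = ∑ a, ∑ l, ∑ b, Plam l * K a b true true x y l :=
          Finset.sum_congr rfl fun a _ => Finset.sum_comm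
      _ = ∑ l, ∑ a, ∑ b, Plam l * K a b true true x y l := Finset.sum_comm
      _ = ∑ l, Plam l * ∑ a, ∑ b, K a b true true x y l := by
          simp only [Finset.mul_sum]
  refine ⟨⟨hP0, ?_⟩, hmXY, ?_, ?_⟩
  · have step : ∀ a b, (∑ x, ∑ y, ∑ l, P a b x y l) = ∑ x, ∑ y, Pin x y * Pc a b x y := by
      intro a b
      exact Finset.sum_congr rfl fun x _ => Finset.sum_congr rfl fun y _ => hmABXY a b x y
    simp only [step]
    calc (∑ a, ∑ b, ∑ x, ∑ y, Pin x y * Pc a b x y)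
        = ∑ a, ∑ x, ∑ b, ∑ y, Pin x y * Pc a b x y :=
          Finset.sum_congr rfl fun a _ => Finset.sum_comm
      _ = ∑ x, ∑ a, ∑ b, ∑ y, Pin x y * Pc a b x y := Finset.sum_comm
      _ = ∑ x, ∑ a, ∑ y, ∑ b, Pin x y * Pc a b x y :=
          Finset.sum_congr rfl fun x _ => Finset.sum_congr rfl fun a _ => Finset.sum_comm
      _ = ∑ x, ∑ y, ∑ a, ∑ b, Pin x y * Pc a b x y :=
          Finset.sum_congr rfl fun x _ => Finset.sum_comm
      _ = ∑ x, ∑ y, Pin x y * ∑ a, ∑ b, Pc a b x y := by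
          simp only [Finset.mul_sum]
      _ = ∑ x, ∑ y, Pin x y := by simp only [hPc1, mul_one]
      _ = 1 := hPin1
  · intro a b x y hpos
    rw [hmABXY, mul_comm, mul_div_assoc, div_self hpos.ne', mul_one]
  · intro a b x y l hpos
    rw [hmXYL] at hpos
    have hfac : ∀ p q : ℝ, 0 ≤ p → 0 ≤ q → 0 < p * q → 0 < p ∧ 0 < q := by
      intro p q hp hq h
      refine ⟨hp.lt_of_ne fun e => ?_, hq.lt_of_ne fun e => ?_⟩
      · rw [← e, zero_mul] at h; exact lt_irrefl 0 h
      · rw [← e, mul_zero] at h; exact lt_irrefl 0 h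
    obtain ⟨hPinpos, h2⟩ := hfac _ _ (hPin0 x y)
      (div_nonneg (mul_nonneg (hPlam0 l) (mul_nonneg (hSA0 x l) (hSB0 y l))) (hNpos x y).le) hpos
    rw [div_pos_iff_of_pos_right (hNpos x y)] at h2
    obtain ⟨hPlpos, h3⟩ := hfac _ _ (hPlam0 l) (mul_nonneg (hSA0 x l) (hSB0 y l)) h2
    obtain ⟨hSApos, hSBpos⟩ := hfac _ _ (hSA0 x l) (hSB0 y l) h3
    have hTpos : 0 < ∑ y', Pin x y' * SB y' l / N x y' := by
      refine Finset.sum_pos' (fun y' _ => div_nonneg (mul_nonneg (hPin0 x y') (hSB0 y' l)) (hNpos x y').le)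
        ⟨y, Finset.mem_univ y, div_pos (mul_pos hPinpos hSBpos) (hNpos x y)⟩
    have hUpos : 0 < ∑ x', Pin x' y * SA x' l / N x' y := by
      refine Finset.sum_pos' (fun x' _ => div_nonneg (mul_nonneg (hPin0 x' y) (hSA0 x' l)) (hNpos x' y).le)
        ⟨x, Finset.mem_univ x, div_pos (mul_pos hPinpos hSApos) (hNpos x y)⟩
    have hmAXL : mAXL P a x l
        = Plam l * KA a true x l * ∑ y', Pin x y' * SB y' l / N x y' := by
      simp only [mAXL, hP]
      rw [Finset.sum_comm, Finset.mul_sum]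
      refine Finset.sum_congr rfl fun y' _ => ?_
      rw [show (∑ b', Pin x y' * (Plam l * (KA a true x l * KB b' true y' l) / N x y'))
          = (Pin x y' * (Plam l * KA a true x l) / N x y') * ∑ b', KB b' true y' l from by
        rw [Finset.mul_sum]
        refine Finset.sum_congr rfl fun b' _ => ?_
        field_simp]
      rw [foldB]
      field_simp
    have hmXL : mXL P x l = Plam l * SA x l * ∑ y', Pin x y' * SB y' l / N x y' := by
      simp only [mXL, hmXYL, Finset.mul_sum]
      refine Finset.sum_congr rfl fun y' _ => ?_
      field_simp
    have hmBYL : mBYL P b y l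
        = Plam l * KB b true y l * ∑ x', Pin x' y * SA x' l / N x' y := by
      simp only [mBYL, hP]
      rw [Finset.sum_comm, Finset.mul_sum]
      refine Finset.sum_congr rfl fun x' _ => ?_
      rw [show (∑ a', Pin x' y * (Plam l * (KA a' true x' l * KB b true y l) / N x' y))
          = (Pin x' y * (Plam l * KB b true y l) / N x' y) * ∑ a', KA a' true x' l from by
        rw [Finset.mul_sum]
        refine Finset.sum_congr rfl fun a' _ => ?_
        field_simp]
      rw [foldA]
      field_simp
    have hmYL : mYL P y l = Plam l * SB y l * ∑ x', Pin x' y * SA x' l / N x' y := by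
      simp only [mYL, hmXYL, Finset.mul_sum]
      refine Finset.sum_congr rfl fun x' _ => ?_
      field_simp
    have hcA : cA P a x l = KA a true x l / SA x l := by
      rw [cA, hmAXL, hmXL, mul_comm (Plam l) (KA a true x l), mul_comm (Plam l) (SA x l),
        mul_assoc, mul_assoc, mul_div_mul_right _ _ (mul_pos hPlpos hTpos).ne']
    have hcB : cB P b y l = KB b true y l / SB y l := by
      rw [cB, hmBYL, hmYL, mul_comm (Plam l) (KB b true y l), mul_comm (Plam l) (SB y l),
        mul_assoc, mul_assoc, mul_div_mul_right _ _ (mul_pos hPlpos hUpos).ne']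
    rw [hcA, hcB, hP, hmXYL, div_eq_iff (by positivity : (0:ℝ) < Pin x y * (Plam l * (SA x l * SB y l) / N x y)).ne']
    field_simp
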